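/- The kinky inference predictor x ↦ (1/2) min_{i=1..N}(ỹ_i + 𝔡(x, s_i)) + (1/2) max_{i=1..N}(ỹ_i − 𝔡(x, s_i)) is Lipschitz continuous with constant 1 with respect to the pseudo-metric 𝔡, i.e., |p(x) − p(x')| ≤ 𝔡(x, x') for all x, x'. -/

import Mathlib

private lemma inf_diff_le {ι : Type*} [Fintype ι] [Nonempty ι] (f g : ι → ℝ) (c : ℝ)
    (h : ∀ i, f i ≤ g i + c) : (⨅ i, f i) - (⨅ i, g i) ≤ c := by
  have h1 : (⨅ i, f i) - c ≤ ⨅ i, g i := by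
    apply le_ciInf
    intro i
    have := (ciInf_le (Set.Finite.bddBelow (Set.finite_range f)) i).trans (h i)
    linarith
  linarith

private lemma sup_diff_le {ι : Type*} [Fintype ι] [Nonempty ι] (f g : ι → ℝ) (c : ℝ)
    (h : ∀ i, f i ≤ g i + c) : (⨆ i, f i) - (⨆ i, g i) ≤ c := by
  have h1 : (⨆ i, f i) ≤ (⨆ i, g i) + c := by
    apply ciSup_le
    intro i
    have := le_ciSup (Set.Finite.bddAbove (Set.finite_range g)) i
    linarith [h i]
  linarith

theorem kinky_inference_lipschitz {X : Type*} {ι : Type*} [Fintype ι] [Nonempty ι]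
    (d : X → X → ℝ) (hd0 : ∀ x y, 0 ≤ d x y) (hdsymm : ∀ x y, d x y = d y x)
    (hdtri : ∀ x y z, d x z ≤ d x y + d y z) (hdrefl : ∀ x, d x x = 0)
    (s : ι → X) (y : ι → ℝ) :
    ∀ x x' : X,
      |((⨅ i, (y i + d x (s i))) + (⨆ i, (y i - d x (s i)))) / 2 -
        ((⨅ i, (y i + d x' (s i))) + (⨆ i, (y i - d x' (s i)))) / 2| ≤ d x x' := by
  have key : ∀ x x' : X, ∀ i : ι, d x (s i) ≤ d x' (s i) + d x x' := by
    intro x x' i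
    have := hdtri x x' (s i)
    linarith
  intro x x'
  have hi1 := inf_diff_le (fun i => y i + d x (s i)) (fun i => y i + d x' (s i)) (d x x')
    (fun i => by have := key x x' i; linarith)
  have hi2 := inf_diff_le (fun i => y i + d x' (s i)) (fun i => y i + d x (s i)) (d x x')
    (fun i => by have := key x' x i; rw [hdsymm x x']; linarith)
  have hs1 := sup_diff_le (fun i => y i - d x (s i)) (fun i => y i - d x' (s i)) (d x x')
    (fun i => by have := key x' x i; rw [hdsymm x x']; linarith)
  have hs2 := sup_diff_le (fun i => y i - d x' (s i)) (fun i => y i - d x (s i)) (d x x')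
    (fun i => by have := key x x' i; linarith)
  rw [abs_le]
  constructor <;> linarith
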